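/- Every distributive lattice, regarded as a poset, is (ℵ₀,ℵ₀)-representable. -/

import Mathlib

open Cardinal

universe u

/-- A poset `P` is `(α,β)`-representable if there is a set `X` and a map `h : P → Set X`
which is an order-embedding, sends existing infima of sets of cardinality `< α` to
intersections, and existing suprema of sets of cardinality `< β` to unions. -/
def IsABRepresentable (α β : Cardinal.{u}) (P : Type u) [PartialOrder P] : Prop :=
  ∃ (X : Type u) (h : P → Set X),
    (∀ p q : P, p ≤ q ↔ h p ⊆ h q) ∧
    (∀ (S : Set P) (m : P), #S < α → IsGLB S m → h m = ⋂ s ∈ S, h s) ∧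
    (∀ (T : Set P) (j : P), #T < β → IsLUB T j → h j = ⋃ t ∈ T, h t)

section Aux

variable {L : Type u} [DistribLattice L]

/-- Embedding of `L` into its bounded completion `WithTop (WithBot L)`. -/
def embL (x : L) : WithTop (WithBot L) := ((x : WithBot L) : WithTop (WithBot L))

lemma embL_le_iff {x y : L} : embL x ≤ embL y ↔ x ≤ y := by
  simp [embL]

lemma embL_inf (x y : L) : embL (x ⊓ y) = embL x ⊓ embL y := by
  simp only [embL, WithBot.coe_inf, WithTop.coe_inf]

lemma embL_sup (x y : L) : embL (x ⊔ y) = embL x ⊔ embL y := by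
  simp only [embL, WithBot.coe_sup, WithTop.coe_sup]

lemma prime_inf' (J : Order.Ideal (WithTop (WithBot L))) (hJ : J.IsPrime)
    (t : Finset L) (ht : t.Nonempty) (h : embL (t.inf' ht id) ∈ J) :
    ∃ a ∈ t, embL a ∈ J := by
  induction ht using Finset.Nonempty.cons_induction with
  | singleton a => exact ⟨a, by simp, by simpa using h⟩
  | cons a s ha hs ih =>
    rw [Finset.inf'_cons (H := hs), embL_inf] at h
    rcases hJ.mem_or_mem h with h | h
    · exact ⟨a, Finset.mem_cons_self a s, h⟩
    · obtain ⟨b, hb, hb'⟩ := ih h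
      exact ⟨b, Finset.mem_cons.2 (Or.inr hb), hb'⟩

lemma mem_sup' (J : Order.Ideal (WithTop (WithBot L)))
    (t : Finset L) (ht : t.Nonempty) (h : ∀ a ∈ t, embL a ∈ J) :
    embL (t.sup' ht id) ∈ J := by
  induction ht using Finset.Nonempty.cons_induction with
  | singleton a => simpa using h a (by simp)
  | cons a s ha hs ih =>
    rw [Finset.sup'_cons (H := hs), embL_sup]
    exact J.sup_mem (h a (Finset.mem_cons_self a s))
      (ih fun b hb => h b (Finset.mem_cons.2 (Or.inr hb)))

lemma isGLB_inf' (t : Finset L) (ht : t.Nonempty) : IsGLB (t : Set L) (t.inf' ht id) := by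
  constructor
  · intro x hx
    exact Finset.inf'_le id hx
  · intro x hx
    exact Finset.le_inf' ht id fun b hb => hx hb

lemma isLUB_sup' (t : Finset L) (ht : t.Nonempty) : IsLUB (t : Set L) (t.sup' ht id) := by
  constructor
  · intro x hx
    exact Finset.le_sup' id hx
  · intro x hx
    exact Finset.sup'_le ht id fun b hb => hx hb

end Aux

theorem distribLattice_representable_omega (L : Type u) [DistribLattice L] :
    IsABRepresentable ℵ₀ ℵ₀ L := by
  classical
  set L' := WithTop (WithBot L)
  -- X : prime ideals of L' respecting top and bottom of L
  refine ⟨{J : Order.Ideal L' // J.IsPrime ∧ (∀ t : L, IsTop t → embL t ∉ J) ∧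
      (∀ b : L, IsBot b → embL b ∈ J)},
    fun p => {J | embL p ∉ J.1}, ?_, ?_, ?_⟩
  · intro p q
    constructor
    · intro hpq J hJ hq
      exact hJ (J.1.lower (embL_le_iff.2 hpq) hq)
    · intro h
      by_contra hpq
      -- separate: filter gen by p, ideal gen by q
      have hdisj : Disjoint ((Order.PFilter.principal (embL p) : Order.PFilter L') : Set L')
          ((Order.Ideal.principal (embL q) : Order.Ideal L') : Set L') := by
        rw [Set.disjoint_left]
        intro x hx hx'
        exact hpq (embL_le_iff.1 (le_trans hx hx'))
      obtain ⟨J, hJp, hIJ, hJF⟩ :=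
        DistribLattice.prime_ideal_of_disjoint_filter_ideal hdisj
      have hqJ : embL q ∈ J := hIJ Order.Ideal.mem_principal_self
      have hpJ : embL p ∉ J := fun hp =>
        Set.disjoint_left.1 hJF (Order.PFilter.mem_principal.2 le_rfl) hp
      have htop : ∀ t : L, IsTop t → embL t ∉ J := fun t htop hmem =>
        hpJ (J.lower (embL_le_iff.2 (htop p)) hmem)
      have hbot : ∀ b : L, IsBot b → embL b ∈ J := fun b hbot =>
        J.lower (embL_le_iff.2 (hbot q)) hqJ
      set Jx : {J : Order.Ideal L' // J.IsPrime ∧ (∀ t : L, IsTop t → embL t ∉ J) ∧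
          (∀ b : L, IsBot b → embL b ∈ J)} := ⟨J, hJp, htop, hbot⟩ with hJx
      exact (h (show embL p ∉ Jx.1 from hpJ)) hqJ
  · intro S m hS hglb
    have hSfin : S.Finite := Cardinal.lt_aleph0_iff_set_finite.1 hS
    rcases S.eq_empty_or_nonempty with rfl | hne
    · have hm : IsTop m := isGLB_empty_iff.1 hglb
      rw [Set.biInter_empty]
      ext J
      simp only [Set.mem_setOf_eq, Set.mem_univ, iff_true]
      exact J.2.2.1 m hm
    · set t := hSfin.toFinset with ht
      have htne : t.Nonempty := by
        rwa [ht, Set.Finite.toFinset_nonempty]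
      have hts : (t : Set L) = S := hSfin.coe_toFinset
      have hm : m = t.inf' htne id := by
        apply hglb.unique
        rw [← hts]
        exact isGLB_inf' t htne
      ext J
      simp only [Set.mem_setOf_eq, Set.mem_iInter]
      constructor
      · intro hmJ s hs hsJ
        exact hmJ (J.1.lower (embL_le_iff.2 (hglb.1 hs)) hsJ)
      · intro hall hmJ
        rw [hm] at hmJ
        obtain ⟨a, hat, haJ⟩ := prime_inf' J.1 J.2.1 t htne hmJ
        exact hall a (hts ▸ hat) haJ
  · intro T j hT hlub
    have hTfin : T.Finite := Cardinal.lt_aleph0_iff_set_finite.1 hT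
    rcases T.eq_empty_or_nonempty with rfl | hne
    · have hj : IsBot j := isLUB_empty_iff.1 hlub
      rw [Set.biUnion_empty]
      ext J
      simp only [Set.mem_setOf_eq, Set.mem_empty_iff_false, iff_false, not_not]
      exact J.2.2.2 j hj
    · set t := hTfin.toFinset with ht
      have htne : t.Nonempty := by
        rwa [ht, Set.Finite.toFinset_nonempty]
      have hts : (t : Set L) = T := hTfin.coe_toFinset
      have hj : j = t.sup' htne id := by
        apply hlub.unique
        rw [← hts]
        exact isLUB_sup' t htne
      ext J
      simp only [Set.mem_setOf_eq, Set.mem_iUnion]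
      constructor
      · intro hjJ
        by_contra hno
        push_neg at hno
        have : ∀ a ∈ t, embL a ∈ J.1 := by
          intro a hat
          have := hno a (hts ▸ hat)
          simpa using this
        exact hjJ (hj ▸ mem_sup' J.1 t htne this)
      · rintro ⟨s, hsT, hsJ⟩ hjJ
        exact hsJ (J.1.lower (embL_le_iff.2 (hlub.1 hsT)) hjJ)
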